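/- Consider the direct CBM on N dual-rail species pairs (X_i^{ON}, X_i^{OFF}) with conservation laws x_i^{ON} + x_i^{OFF} = 1, and reactions for each node i and each neighbor configuration α with rate-constant ratios k_{i+|α}/k_{i-|α} = exp(θ_i + ∑_{j∈N(i)} w_{ij} x_j^{ON}). Then the induced CTMC on the reachable state space satisfies detailed balance with respect to π(s) ∝ exp(∑_{i<j} w_{ij} x_i^{ON} x_j^{ON} + ∑_i θ_i x_i^{ON}), and π is the unique stationary distribution; under the bijection x_i = x_i^{ON} it equals the Boltzmann machine distribution P(x) = e^{-E(x)}/Z. -/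

import Mathlib

/-- numeric value of a binary (dual-rail) species state -/
def bval (b : Bool) : ℝ := if b then 1 else 0


lemma pair_sum_flip (N : ℕ) (w : Fin N → Fin N → ℝ)
    (hsym : ∀ i j, w i j = w j i) (hdiag : ∀ i, w i i = 0)
    (i : Fin N) (a a' : Fin N → ℝ) (ha' : a' i = 1) (ha : a i = 0)
    (hag : ∀ j, j ≠ i → a' j = a j) :
    ∑ p ∈ Finset.univ.filter (fun p : Fin N × Fin N => p.1 < p.2),
      (w p.1 p.2 * a' p.1 * a' p.2 - w p.1 p.2 * a p.1 * a p.2)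
    = ∑ j, w i j * a j := by
  classical
  set T := Finset.univ.filter (fun p : Fin N × Fin N => p.1 < p.2) with hT
  set g : Fin N × Fin N → ℝ := fun p => w p.1 p.2 * a' p.1 * a' p.2 - w p.1 p.2 * a p.1 * a p.2 with hg
  have hsplit : ∑ p ∈ T.filter (fun p => p.1 = i), g p
      + ∑ p ∈ T.filter (fun p => ¬ p.1 = i), g p = ∑ p ∈ T, g p :=
    Finset.sum_filter_add_sum_filter_not T _ g
  have hA : ∑ p ∈ T.filter (fun p => p.1 = i), g p
      = ∑ j ∈ Finset.univ.filter (fun j => i < j), w i j * a j := by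
    refine Finset.sum_nbij' (fun p => p.2) (fun j => (i, j)) ?_ ?_ ?_ ?_ ?_
    · intro p hp
      simp only [T, Finset.mem_filter, Finset.mem_univ, true_and] at hp ⊢
      exact hp.2 ▸ hp.1
    · intro j hj
      simp only [T, Finset.mem_filter, Finset.mem_univ, true_and] at hj ⊢
      exact ⟨hj, trivial⟩
    · intro p hp
      simp only [T, Finset.mem_filter] at hp
      exact Prod.ext hp.2.symm rfl
    · intro j hj; rfl
    · intro p hp
      simp only [T, Finset.mem_filter, Finset.mem_univ, true_and] at hp
      obtain ⟨hlt, hp1⟩ := hp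
      have hne : p.2 ≠ i := by rw [← hp1]; exact (ne_of_gt hlt)
      rw [hg]; simp only
      rw [hp1, ha', ha, hag p.2 hne]; ring
  have hBsplit : ∑ p ∈ (T.filter (fun p => ¬ p.1 = i)).filter (fun p => p.2 = i), g p
      = ∑ p ∈ T.filter (fun p => ¬ p.1 = i), g p := by
    apply Finset.sum_filter_of_ne
    intro p hp hgne
    simp only [T, Finset.mem_filter, Finset.mem_univ, true_and] at hp
    by_contra h2
    apply hgne
    rw [hg]; simp only
    rw [hag p.1 hp.2, hag p.2 h2]; ring
  have hB : ∑ p ∈ (T.filter (fun p => ¬ p.1 = i)).filter (fun p => p.2 = i), g p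
      = ∑ j ∈ Finset.univ.filter (fun j => j < i), w i j * a j := by
    refine Finset.sum_nbij' (fun p => p.1) (fun j => (j, i)) ?_ ?_ ?_ ?_ ?_
    · intro p hp
      simp only [T, Finset.mem_filter, Finset.mem_univ, true_and] at hp ⊢
      exact hp.2 ▸ hp.1.1
    · intro j hj
      simp only [T, Finset.mem_filter, Finset.mem_univ, true_and] at hj ⊢
      exact ⟨⟨hj, ne_of_lt hj⟩, trivial⟩
    · intro p hp
      simp only [T, Finset.mem_filter] at hp
      exact Prod.ext rfl hp.2.symm
    · intro j hj; rfl
    · intro p hp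
      simp only [T, Finset.mem_filter, Finset.mem_univ, true_and] at hp
      obtain ⟨⟨hlt, hne1⟩, h2⟩ := hp
      rw [hg]; simp only
      rw [h2, ha', ha, hag p.1 hne1, hsym p.1 i]; ring
  have hAB : ∑ j ∈ Finset.univ.filter (fun j => i < j), w i j * a j
      + ∑ j ∈ Finset.univ.filter (fun j => j < i), w i j * a j = ∑ j, w i j * a j := by
    have h1 : ∑ j ∈ Finset.univ.filter (fun j => j < i), w i j * a j
        = ∑ j ∈ Finset.univ.filter (fun j => ¬ i < j), w i j * a j := by
      apply Finset.sum_subset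
      · intro j hj
        simp only [Finset.mem_filter, Finset.mem_univ, true_and] at hj ⊢
        exact not_lt_of_gt hj
      · intro j hj hj2
        simp only [Finset.mem_filter, Finset.mem_univ, true_and, not_lt] at hj hj2
        have : j = i := le_antisymm hj hj2
        rw [this, hdiag]; ring
    rw [h1]
    exact Finset.sum_filter_add_sum_filter_not _ _ _
  rw [← hsplit, hA, ← hBsplit, hB, hAB]

lemma flip_exponent (N : ℕ) (w : Fin N → Fin N → ℝ) (θ : Fin N → ℝ)
    (hsym : ∀ i j, w i j = w j i) (hdiag : ∀ i, w i i = 0)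
    (s : Fin N → Bool) (i : Fin N) (hsi : s i = false) :
    ((∑ p ∈ Finset.univ.filter (fun p : Fin N × Fin N => p.1 < p.2),
        w p.1 p.2 * bval (Function.update s i true p.1) * bval (Function.update s i true p.2)) +
      ∑ j, θ j * bval (Function.update s i true j))
    = ((∑ p ∈ Finset.univ.filter (fun p : Fin N × Fin N => p.1 < p.2),
        w p.1 p.2 * bval (s p.1) * bval (s p.2)) + ∑ j, θ j * bval (s j))
      + (θ i + ∑ j ∈ Finset.univ.filter (fun j => w i j ≠ 0), w i j * bval (s j)) := by
  classical
  set a : Fin N → ℝ := fun j => bval (s j) with hadef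
  set a' : Fin N → ℝ := fun j => bval (Function.update s i true j) with ha'def
  have ha' : a' i = 1 := by simp [ha'def, bval]
  have ha : a i = 0 := by simp [hadef, bval, hsi]
  have hag : ∀ j, j ≠ i → a' j = a j := by
    intro j hj; simp [ha'def, hadef, Function.update_of_ne hj]
  have hw : ∑ p ∈ Finset.univ.filter (fun p : Fin N × Fin N => p.1 < p.2),
        (w p.1 p.2 * a' p.1 * a' p.2 - w p.1 p.2 * a p.1 * a p.2)
      = ∑ j, w i j * a j := pair_sum_flip N w hsym hdiag i a a' ha' ha hag
  rw [Finset.sum_sub_distrib] at hw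
  have hθ : ∑ j, θ j * a' j - ∑ j, θ j * a j = θ i := by
    rw [← Finset.sum_sub_distrib]
    rw [Finset.sum_eq_single i]
    · rw [ha', ha]; ring
    · intro b _ hb; rw [hag b hb]; ring
    · intro h; exact absurd (Finset.mem_univ i) h
  have hfilter : ∑ j ∈ Finset.univ.filter (fun j => w i j ≠ 0), w i j * a j
      = ∑ j, w i j * a j := by
    apply Finset.sum_filter_of_ne
    intro j _ hne h0
    exact hne (by rw [h0]; ring)
  rw [hfilter]
  have := hw
  linarith [hw, hθ]


/-- The direct CBM (dual-rail species with conservation `x_i^{ON}+x_i^{OFF}=1`,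
so states are `Fin N → Bool`, and single-node flip reactions with rate-constant ratio
`exp (θ i + ∑_{j ∈ N(i)} w i j * x_j^{ON})`) induces a CTMC that is detailed balanced with
respect to `π s ∝ exp (∑_{i<j} w i j x_i^{ON} x_j^{ON} + ∑ i, θ i x_i^{ON})`; `π` is the unique
stationary distribution, and it equals the Boltzmann machine distribution `e^{-E x}/Z`. -/
theorem direct_cbm_realizes_boltzmann_machine (N : ℕ)
    (w : Fin N → Fin N → ℝ) (θ : Fin N → ℝ)
    (hsym : ∀ i j, w i j = w j i) (hdiag : ∀ i, w i i = 0)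
    -- CTMC transition rates on the reachable state space {0,1}^N
    (R : (Fin N → Bool) → (Fin N → Bool) → ℝ)
    (hRnonneg : ∀ s s', 0 ≤ R s s')
    -- transitions flip exactly one node
    (hRsupp : ∀ s s', R s s' ≠ 0 → ∃ i, s' = Function.update s i (!(s i)) ∧ s' ≠ s)
    (hRdiag : ∀ s, R s s = 0)
    -- the flip reactions have positive rates with the prescribed ratio
    (hRpos : ∀ s i, 0 < R s (Function.update s i (!(s i))))
    (hratio : ∀ (s : Fin N → Bool) (i : Fin N), s i = false →
      R s (Function.update s i true) / R (Function.update s i true) s =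
        Real.exp (θ i + ∑ j ∈ Finset.univ.filter (fun j => w i j ≠ 0), w i j * bval (s j)))
    -- the claimed stationary distribution
    (Z : ℝ)
    (hZ : Z = ∑ s : Fin N → Bool,
      Real.exp ((∑ p ∈ Finset.univ.filter (fun p : Fin N × Fin N => p.1 < p.2),
          w p.1 p.2 * bval (s p.1) * bval (s p.2)) + ∑ i, θ i * bval (s i)))
    (π : (Fin N → Bool) → ℝ)
    (hπ : ∀ s, π s =
      Real.exp ((∑ p ∈ Finset.univ.filter (fun p : Fin N × Fin N => p.1 < p.2),
          w p.1 p.2 * bval (s p.1) * bval (s p.2)) + ∑ i, θ i * bval (s i)) / Z)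
    -- the Boltzmann machine distribution
    (E : (Fin N → ℝ) → ℝ)
    (hE : ∀ x, E x =
      -(∑ p ∈ Finset.univ.filter (fun p : Fin N × Fin N => p.1 < p.2),
          w p.1 p.2 * x p.1 * x p.2) - ∑ i, θ i * x i)
    (ZBM : ℝ) (hZBM : ZBM = ∑ s : Fin N → Bool, Real.exp (-(E (fun i => bval (s i)))))
    (P : (Fin N → Bool) → ℝ) (hP : ∀ s, P s = Real.exp (-(E (fun i => bval (s i)))) / ZBM) :
    -- (1) detailed balance of the CTMC w.r.t. π
    (∀ s s', π s * R s s' = π s' * R s' s) ∧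
    -- (2) π is stationary and is the unique stationary distribution
    (∀ s', ∑ s, (R s s' * π s - R s' s * π s') = 0) ∧
    (∀ p : (Fin N → Bool) → ℝ, (∀ s, 0 ≤ p s) → (∑ s, p s = 1) →
      (∀ s', ∑ s, (R s s' * p s - R s' s * p s') = 0) → p = π) ∧
    -- (3) π equals the Boltzmann machine distribution under the bijection x_i = x_i^{ON}
    (∀ s, π s = P s) := by
    classical
  set F : (Fin N → Bool) → ℝ := fun s =>
    (∑ p ∈ Finset.univ.filter (fun p : Fin N × Fin N => p.1 < p.2),
        w p.1 p.2 * bval (s p.1) * bval (s p.2)) + ∑ i, θ i * bval (s i) with hF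
  have hZpos : 0 < Z := by
    rw [hZ]
    exact Finset.sum_pos (fun s _ => Real.exp_pos _) Finset.univ_nonempty
  have hπpos : ∀ s, 0 < π s := fun s => by
    rw [hπ s]; exact div_pos (Real.exp_pos _) hZpos
  -- detailed balance for a single false→true flip
  have db_flip : ∀ (s : Fin N → Bool) (i : Fin N), s i = false →
      π s * R s (Function.update s i true) =
      π (Function.update s i true) * R (Function.update s i true) s := by
    intro s i hsi
    set s' := Function.update s i true with hs'
    have hback : Function.update s' i (!(s' i)) = s := by
      have h1 : s' i = true := Function.update_self i true s
      rw [h1]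
      show Function.update s' i false = s
      rw [hs', Function.update_idem, ← hsi, Function.update_eq_self]
    have hr2 : 0 < R s' s := by
      have := hRpos s' i; rwa [hback] at this
    have hr1 : R s s' = Real.exp (θ i + ∑ j ∈ Finset.univ.filter (fun j => w i j ≠ 0),
        w i j * bval (s j)) * R s' s := by
      have := hratio s i hsi
      have hr2' : R (Function.update s i true) s ≠ 0 := ne_of_gt hr2
      rw [div_eq_iff hr2'] at this
      exact this
    have hFs' : F s' = F s + (θ i + ∑ j ∈ Finset.univ.filter (fun j => w i j ≠ 0),
        w i j * bval (s j)) := flip_exponent N w θ hsym hdiag s i hsi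
    have hπs' : π s' = π s * Real.exp (θ i + ∑ j ∈ Finset.univ.filter (fun j => w i j ≠ 0),
        w i j * bval (s j)) := by
      rw [hπ s', hπ s]
      show Real.exp (F s') / Z = Real.exp (F s) / Z * _
      rw [hFs', Real.exp_add]; ring
    rw [hr1, hπs']; ring
  -- full detailed balance
  have DB : ∀ s s', π s * R s s' = π s' * R s' s := by
    intro s s'
    by_cases hz : R s s' = 0
    · have hz' : R s' s = 0 := by
        by_contra h
        obtain ⟨i, hi, _⟩ := hRsupp s' s h
        have hsi : s i = !(s' i) := by rw [hi]; simp
        have h2 : s' = Function.update s i (!(s i)) := by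
          rw [hsi, Bool.not_not, hi, Function.update_idem, Function.update_eq_self]
        have h3 := hRpos s i
        rw [← h2] at h3
        exact absurd hz (ne_of_gt h3)
      rw [hz, hz', mul_zero, mul_zero]
    · obtain ⟨i, hi, _⟩ := hRsupp s s' hz
      cases hb : s i with
      | false =>
        have hs' : s' = Function.update s i true := by rw [hi, hb]; rfl
        rw [hs']; exact db_flip s i hb
      | true =>
        have hfi : s' i = false := by rw [hi, hb]; simp
        have hss : Function.update s' i true = s := by
          rw [hi, hb]
          show Function.update (Function.update s i false) i true = s
          rw [Function.update_idem, ← hb, Function.update_eq_self]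
        have := db_flip s' i hfi
        rw [hss] at this
        exact this.symm
  have hsumπ : ∑ s, π s = 1 := by
    have : ∑ s, π s = (∑ s : Fin N → Bool, Real.exp (F s)) / Z := by
      rw [Finset.sum_div]
      exact Finset.sum_congr rfl (fun s _ => hπ s)
    rw [this, ← hZ, div_self (ne_of_gt hZpos)]
  refine ⟨DB, ?_, ?_, ?_⟩
  · -- stationarity
    intro s'
    apply Finset.sum_eq_zero
    intro s _
    have := DB s s'
    linarith
  · -- uniqueness
    intro p hp0 hp1 hpstat
    set h : (Fin N → Bool) → ℝ := fun s => p s / π s with hh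
    have hpt : ∀ t, p t = h t * π t := by
      intro t
      show p t = p t / π t * π t
      exact (div_mul_cancel₀ (p t) (ne_of_gt (hπpos t))).symm
    obtain ⟨m, _, hm⟩ := Finset.exists_max_image Finset.univ h Finset.univ_nonempty
    have step : ∀ s, h s = h m → ∀ i, h (Function.update s i (!(s i))) = h m := by
      intro s hs i
      have hterm : ∀ t, R t s * p t - R s t * p s = R s t * π s * (h t - h s) := by
        intro t
        have hdb : R t s * π t = R s t * π s := by have := DB t s; linarith
        rw [hpt t, hpt s]
        calc R t s * (h t * π t) - R s t * (h s * π s)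
            = (R t s * π t) * h t - (R s t * π s) * h s := by ring
          _ = R s t * π s * (h t - h s) := by rw [hdb]; ring
      have hsum : ∑ t, R s t * π s * (h t - h s) = 0 := by
        rw [← hpstat s]
        exact (Finset.sum_congr rfl (fun t _ => hterm t)).symm
      have hnonpos : ∀ t ∈ Finset.univ, R s t * π s * (h t - h s) ≤ 0 := by
        intro t _
        apply mul_nonpos_of_nonneg_of_nonpos
        · exact mul_nonneg (hRnonneg s t) (le_of_lt (hπpos s))
        · rw [hs]; linarith [hm t (Finset.mem_univ t)]
      have hzero := (Finset.sum_eq_zero_iff_of_nonpos hnonpos).mp hsum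
        (Function.update s i (!(s i))) (Finset.mem_univ _)
      have hRp : 0 < R s (Function.update s i (!(s i))) := hRpos s i
      have hπp : 0 < π s := hπpos s
      have : h (Function.update s i (!(s i))) - h s = 0 := by
        by_contra hne
        exact hne (by
          have := mul_eq_zero.mp hzero
          rcases this with h1 | h2
          · exact absurd h1 (ne_of_gt (mul_pos hRp hπp))
          · exact h2)
      rw [← hs]; linarith
    have allmax : ∀ s, h s = h m := by
      have key : ∀ n (s : Fin N → Bool),
          (Finset.univ.filter (fun i => s i ≠ m i)).card = n → h s = h m := by
        intro n
        induction n with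
        | zero =>
          intro s h0
          have hsm : s = m := by
            funext i
            by_contra hc
            have : i ∈ Finset.univ.filter (fun i => s i ≠ m i) := by
              simp [hc]
            rw [Finset.card_eq_zero.mp h0] at this
            exact absurd this (Finset.notMem_empty i)
          rw [hsm]
        | succ n ih =>
          intro s hcard
          have hne : (Finset.univ.filter (fun i => s i ≠ m i)).Nonempty := by
            rw [← Finset.card_pos, hcard]; omega
          obtain ⟨i, hi⟩ := hne
          have hii : s i ≠ m i := (Finset.mem_filter.mp hi).2
          have hmi : m i = !(s i) := by
            revert hii; cases s i <;> cases m i <;> simp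
          set t := Function.update s i (!(s i)) with htdef
          have hfil : Finset.univ.filter (fun j => t j ≠ m j)
              = (Finset.univ.filter (fun j => s j ≠ m j)).erase i := by
            ext j
            simp only [Finset.mem_filter, Finset.mem_univ, true_and, Finset.mem_erase]
            rcases eq_or_ne j i with rfl | hj
            · simp [htdef, Function.update_self, hmi]
            · simp [htdef, Function.update_of_ne hj, hj]
          have hcard' : (Finset.univ.filter (fun j => t j ≠ m j)).card = n := by
            rw [hfil, Finset.card_erase_of_mem hi, hcard]
            omega
          have hht : h t = h m := ih t hcard'
          have hback : Function.update t i (!(t i)) = s := by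
            have h1 : t i = !(s i) := Function.update_self i _ s
            rw [h1, Bool.not_not, htdef, Function.update_idem, Function.update_eq_self]
          have := step t hht i
          rw [hback] at this
          exact this
      intro s
      exact key _ s rfl
    have hM : h m = 1 := by
      have h1 : ∑ s, p s = h m * ∑ s, π s := by
        rw [Finset.mul_sum]
        exact Finset.sum_congr rfl (fun s _ => by rw [hpt s, allmax s])
      rw [hp1, hsumπ, mul_one] at h1
      exact h1.symm
    funext s
    rw [hpt s, allmax s, hM, one_mul]
  · -- equals Boltzmann machine distribution
    have hEeq : ∀ s : Fin N → Bool, -(E (fun i => bval (s i))) = F s := by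
      intro s
      rw [hE, hF]
      ring
    have hZeq : ZBM = Z := by
      rw [hZBM, hZ]
      exact Finset.sum_congr rfl (fun s _ => by rw [hEeq s])
    intro s
    rw [hπ s, hP s, hZeq, hEeq s]
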